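/- Let ℓ ≥ 3 be an integer. (i) For every (η, a) ∈ U^(1) there exists an integer k with 1 ≤ k ≤ ℓ−1 such that the exponent vector (η − k, a − (2k+1)), where (η − k)(i) = η(i) − k, belongs to U^(0). (ii) For distinct integers i, j with 1 ≤ i, j ≤ ℓ−1, there is no (μ, c) ∈ U^(0) with η_i = μ + η_j (pointwise) and 2i+1 = c + 2j+1. (Thus T^{η_1}, T^{η_2}, …, T^{η_{ℓ−1}} is a minimal system of generators of the canonical ideal of the Ehrhart ring consisting of monomials.) -/

import Mathlib

/-- `(μ, d)` belongs to `U^(n)` for the cycle of length `2ℓ+1`. -/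
def inU (ℓ : ℕ) (n : ℤ) (μ : Fin (2 * ℓ + 1) → ℤ) (d : ℤ) : Prop :=
  (∀ i, n ≤ μ i) ∧
  (∀ i : Fin (2 * ℓ + 1), μ i + μ (i + 1) ≤ d - n) ∧
  (∑ i, μ i ≤ (ℓ : ℤ) * d - n)

private lemma sum_range_odd (g : ℕ → ℤ) (n : ℕ) :
    ∑ t ∈ Finset.range (2 * n + 1), g t
      = g 0 + ∑ s ∈ Finset.range n, (g (2 * s + 1) + g (2 * s + 2)) := by
  induction n with
  | zero => simp
  | succ n ih =>
    have h : 2 * (n + 1) + 1 = (2 * n + 1) + 1 + 1 := by ring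
    rw [h, Finset.sum_range_succ, Finset.sum_range_succ, ih, Finset.sum_range_succ]
    ring

open Fin.NatCast in
private lemma key (ℓ : ℕ) (η : Fin (2 * ℓ + 1) → ℤ) (a : ℤ)
    (h2 : ∀ i : Fin (2 * ℓ + 1), η i + η (i + 1) ≤ a - 1) (x : Fin (2 * ℓ + 1)) :
    ∑ i, η i ≤ η x + (ℓ : ℤ) * (a - 1) := by
  have e1 : ∑ i, η i = ∑ i : Fin (2 * ℓ + 1), η (x + i) :=
    (Fintype.sum_equiv (Equiv.addLeft x) (fun i => η (x + i)) η (fun i => rfl)).symm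
  have e2 : ∑ i : Fin (2 * ℓ + 1), η (x + i)
      = ∑ t ∈ Finset.range (2 * ℓ + 1), η (x + (t : Fin (2 * ℓ + 1))) := by
    rw [← Fin.sum_univ_eq_sum_range (fun t => η (x + (t : Fin (2 * ℓ + 1))))]
    simp [Fin.cast_val_eq_self]
  rw [e1, e2, sum_range_odd (fun t => η (x + (t : Fin (2 * ℓ + 1)))) ℓ]
  simp only [Nat.cast_zero, add_zero]
  have hbound : ∀ s ∈ Finset.range ℓ,
      η (x + ((2 * s + 1 : ℕ) : Fin (2 * ℓ + 1))) +
        η (x + ((2 * s + 2 : ℕ) : Fin (2 * ℓ + 1))) ≤ a - 1 := by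
    intro s _
    have hc : ((2 * s + 2 : ℕ) : Fin (2 * ℓ + 1)) = ((2 * s + 1 : ℕ) : Fin (2 * ℓ + 1)) + 1 := by
      rw [show 2 * s + 2 = (2 * s + 1) + 1 from rfl, Nat.cast_succ]
    have := h2 (x + ((2 * s + 1 : ℕ) : Fin (2 * ℓ + 1)))
    rw [hc, ← add_assoc]
    exact this
  have hsum : ∑ s ∈ Finset.range ℓ,
      (η (x + ((2 * s + 1 : ℕ) : Fin (2 * ℓ + 1))) +
        η (x + ((2 * s + 2 : ℕ) : Fin (2 * ℓ + 1)))) ≤ (ℓ : ℤ) * (a - 1) := by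
    calc _ ≤ ∑ _s ∈ Finset.range ℓ, (a - 1) := Finset.sum_le_sum hbound
    _ = (ℓ : ℤ) * (a - 1) := by simp [mul_comm]; ring
  linarith

theorem stmt_12 (ℓ : ℕ) (hℓ : 3 ≤ ℓ) :
    (∀ (η : Fin (2 * ℓ + 1) → ℤ) (a : ℤ), inU ℓ 1 η a →
      ∃ k : ℤ, 1 ≤ k ∧ k ≤ (ℓ : ℤ) - 1 ∧
        inU ℓ 0 (fun i => η i - k) (a - (2 * k + 1))) ∧
    (∀ i j : ℤ, 1 ≤ i → i ≤ (ℓ : ℤ) - 1 → 1 ≤ j → j ≤ (ℓ : ℤ) - 1 → i ≠ j →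
      ¬ ∃ (μ : Fin (2 * ℓ + 1) → ℤ) (c : ℤ), inU ℓ 0 μ c ∧
        (∀ x : Fin (2 * ℓ + 1), i = μ x + j) ∧ 2 * i + 1 = c + (2 * j + 1)) := by
  have hℓ' : (3 : ℤ) ≤ (ℓ : ℤ) := by exact_mod_cast hℓ
  constructor
  · rintro η a ⟨h1, h2, h3⟩
    set S : ℤ := ∑ i, η i with hS
    refine ⟨max 1 (S - (ℓ : ℤ) * (a - 1)), le_max_left _ _, ?_, ?_, ?_, ?_⟩
    · apply max_le
      · linarith
      · linarith
    · intro i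
      have hk : max 1 (S - (ℓ : ℤ) * (a - 1)) ≤ η i := by
        apply max_le (h1 i)
        have := key ℓ η a h2 i
        linarith
      simpa using hk
    · intro i
      have := h2 i
      simp only
      have hk1 : (1 : ℤ) ≤ max 1 (S - (ℓ : ℤ) * (a - 1)) := le_max_left _ _
      linarith
    · simp only
      rw [Finset.sum_sub_distrib, Finset.sum_const]
      simp only [Finset.card_univ, Fintype.card_fin, nsmul_eq_mul]
      have hk2 : S - (ℓ : ℤ) * (a - 1) ≤ max 1 (S - (ℓ : ℤ) * (a - 1)) := le_max_right _ _
      push_cast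
      nlinarith [hk2]
  · rintro i j hi1 hi2 hj1 hj2 hij ⟨μ, c, ⟨g1, g2, g3⟩, hconst, hc⟩
    have hμ : ∀ x : Fin (2 * ℓ + 1), μ x = i - j := fun x => by linarith [hconst x]
    have hsum : ∑ x, μ x = ((2 * ℓ + 1 : ℕ) : ℤ) * (i - j) := by
      rw [Finset.sum_congr rfl (fun x _ => hμ x), Finset.sum_const]
      simp [Finset.card_univ]
    have hc' : c = 2 * (i - j) := by linarith
    have hge : 0 ≤ i - j := by
      have := g1 ⟨0, by omega⟩
      rw [hμ] at this
      linarith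
    rw [hsum, hc'] at g3
    push_cast at g3
    have : i = j := by nlinarith
    exact hij this
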